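/- Let T > 0, let f : ℝ → ℝ be continuously differentiable on [0,T] with f(t) > 0 for all t ∈ [0,T], let m ∈ ℝ and λ ∈ ℝ with λ ≠ 0. Suppose u : ℝ → ℂ is twice differentiable on [0,T] and satisfies on [0,T] the decoupled second-order equation u''(t) + (f'(t)/f(t)) u'(t) + ( f''(t)/(2 f(t)) − f'(t)²/(4 f(t)²) + m f'(t)/f(t)² − m²/f(t)² + λ² ) u(t) = 0 (assuming f is twice differentiable on [0,T]). Define v : ℝ → ℂ by v(t) = (i/λ) ( u'(t) + ( f'(t)/(2 f(t)) − m/f(t) ) u(t) ). Then the pair (u, v) solves the coupled radial Dirac system on [0,T]. -/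

import Mathlib

open Complex Set

/-- **Reconstruction of the second spinor component.**
If `u` satisfies the decoupled second-order equation on `[0,T]` with `λ ≠ 0`,
and `v` is defined by `v = (i/λ)(u' + (f'/(2f) − m/f) u)`, then the pair
`(u, v)` solves the coupled radial Dirac system on `[0,T]`. -/
theorem reconstruction_solves_coupled_system
    (T : ℝ) (hT : 0 < T)
    (f f' f'' : ℝ → ℝ)
    (hf : ∀ t ∈ Icc (0:ℝ) T, HasDerivAt f (f' t) t)
    (hf' : ∀ t ∈ Icc (0:ℝ) T, HasDerivAt f' (f'' t) t)
    (hf'c : ContinuousOn f' (Icc (0:ℝ) T))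
    (hfpos : ∀ t ∈ Icc (0:ℝ) T, 0 < f t)
    (m lam : ℝ) (hlam : lam ≠ 0)
    (u u' u'' : ℝ → ℂ)
    (hu : ∀ t ∈ Icc (0:ℝ) T, HasDerivAt u (u' t) t)
    (hu' : ∀ t ∈ Icc (0:ℝ) T, HasDerivAt u' (u'' t) t)
    (hode : ∀ t ∈ Icc (0:ℝ) T,
      u'' t + ((f' t : ℂ) / (f t : ℂ)) * u' t
        + ( (f'' t : ℂ) / (2 * (f t : ℂ))
            - (f' t : ℂ)^2 / (4 * (f t : ℂ)^2)
            + (m : ℂ) * (f' t : ℂ) / (f t : ℂ)^2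
            - (m : ℂ)^2 / (f t : ℂ)^2
            + (lam : ℂ)^2 ) * u t = 0)
    (v : ℝ → ℂ)
    (hvdef : ∀ t, v t = (Complex.I / (lam : ℂ)) *
      (u' t + ((f' t : ℂ) / (2 * (f t : ℂ)) - (m : ℂ) / (f t : ℂ)) * u t)) :
    ∃ v' : ℝ → ℂ,
      (∀ t ∈ Icc (0:ℝ) T, HasDerivAt v (v' t) t) ∧
      (∀ t ∈ Icc (0:ℝ) T,
        v' t + ((f' t : ℂ) / (2 * (f t : ℂ))) * v t + ((m : ℂ) / (f t : ℂ)) * v t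
          = -Complex.I * (lam : ℂ) * u t) ∧
      (∀ t ∈ Icc (0:ℝ) T,
        u' t + ((f' t : ℂ) / (2 * (f t : ℂ))) * u t - ((m : ℂ) / (f t : ℂ)) * u t
          = -Complex.I * (lam : ℂ) * v t) := by
  have hlamC : (lam : ℂ) ≠ 0 := by exact_mod_cast hlam
  refine ⟨fun t => (Complex.I / (lam : ℂ)) * (u'' t
      + ((((f'' t : ℂ)) * (2 * (f t : ℂ)) - (f' t : ℂ) * (2 * (f' t : ℂ))) / (2 * (f t : ℂ))^2
         - (0 * (f t : ℂ) - (m : ℂ) * (f' t : ℂ)) / (f t : ℂ)^2) * u t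
      + ((f' t : ℂ) / (2 * (f t : ℂ)) - (m : ℂ) / (f t : ℂ)) * u' t), ?_, ?_, ?_⟩
  · intro t ht
    have hfne : (f t : ℂ) ≠ 0 := by
      exact_mod_cast (hfpos t ht).ne'
    have h2fne : (2 : ℂ) * (f t : ℂ) ≠ 0 := by
      simp [hfne]
    have hA : HasDerivAt (fun s => (f' s : ℂ) / (2 * (f s : ℂ)))
        (((f'' t : ℂ) * (2 * (f t : ℂ)) - (f' t : ℂ) * (2 * (f' t : ℂ))) / (2 * (f t : ℂ))^2) t :=
      ((hf' t ht).ofReal_comp).div (((hf t ht).ofReal_comp).const_mul 2) h2fne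
    have hB : HasDerivAt (fun s => (m : ℂ) / (f s : ℂ))
        ((0 * (f t : ℂ) - (m : ℂ) * (f' t : ℂ)) / (f t : ℂ)^2) t :=
      (hasDerivAt_const t (m : ℂ)).div ((hf t ht).ofReal_comp) hfne
    have hG := (hA.sub hB).mul (hu t ht)
    have hD := ((hu' t ht).add hG).const_mul (Complex.I / (lam : ℂ))
    have hveq : v = fun s => (Complex.I / (lam : ℂ)) *
        (u' s + ((f' s : ℂ) / (2 * (f s : ℂ)) - (m : ℂ) / (f s : ℂ)) * u s) := funext hvdef
    rw [hveq]
    convert hD using 1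
    · rfl
    · rfl
    · simp only [Pi.sub_apply]
      ring
  · intro t ht
    have hfne : (f t : ℂ) ≠ 0 := by exact_mod_cast (hfpos t ht).ne'
    have key := hode t ht
    rw [hvdef t]
    have hu'' : u'' t = - (((f' t : ℂ) / (f t : ℂ)) * u' t
        + ( (f'' t : ℂ) / (2 * (f t : ℂ))
            - (f' t : ℂ)^2 / (4 * (f t : ℂ)^2)
            + (m : ℂ) * (f' t : ℂ) / (f t : ℂ)^2
            - (m : ℂ)^2 / (f t : ℂ)^2
            + (lam : ℂ)^2 ) * u t) := by linear_combination key
    have hk : (f t:ℂ) * ((f t:ℂ))⁻¹ = 1 := mul_inv_cancel₀ hfne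
    have hl : (lam:ℂ) * ((lam:ℂ))⁻¹ = 1 := mul_inv_cancel₀ hlamC
    simp only [hu'']
    linear_combination ((1/2 : ℂ) * ((f t:ℂ))⁻¹ * ((lam:ℂ))⁻¹ * Complex.I * (f'' t:ℂ) * u t) * hk
      + (-(lam:ℂ) * Complex.I * u t) * hl
  · intro t ht
    rw [hvdef t]
    have hl : (lam:ℂ) * ((lam:ℂ))⁻¹ = 1 := mul_inv_cancel₀ hlamC
    linear_combination (Complex.I^2 * u' t - ((f t:ℂ))⁻¹ * Complex.I^2 * (m:ℂ) * u t
        + (1/2 : ℂ) * ((f t:ℂ))⁻¹ * Complex.I^2 * (f' t:ℂ) * u t) * hl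
      + (u' t - ((f t:ℂ))⁻¹ * (m:ℂ) * u t + (1/2 : ℂ) * ((f t:ℂ))⁻¹ * (f' t:ℂ) * u t) * Complex.I_sq
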